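/- arXiv:math/0307158 — 2 statements merged into one kernel-verified Lean document; each statement's English description precedes it below -/
import Mathlib

section
/- Let (λ_k)_{k≥1} be a sequence of positive reals whose counting function N(r) = #{k : λ_k ≤ r} satisfies N(r) ≤ A + √r for all r > 0 and N(r) = 0 for r < λ₁, where A > 0. Then for every complex number z, the infinite product f(z) = ∏_{k≥1} (1 − z/λ_k) converges and satisfies ln|f(z)| ≤ π·√|z| + A·ln(1 + |z|/λ₁). -/
open MeasureTheory Set Filter Real Topology

private lemma myint1 (r a : ℝ) (hr : 0 < r) (ha : 0 < a) :
    IntegrableOn (fun t => r / (t * (t + r))) (Set.Ioi a) ∧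
    ∫ t in Set.Ioi a, r / (t * (t + r)) = Real.log (1 + r / a) := by
  have hderiv : ∀ t ∈ Set.Ioi a, HasDerivAt (fun t => Real.log t - Real.log (t + r))
      (r / (t * (t + r))) t := by
    intro t ht
    have ht0 : 0 < t := ha.trans ht
    have h1 : HasDerivAt (fun t : ℝ => Real.log t) t⁻¹ t := Real.hasDerivAt_log ht0.ne'
    have h2 : HasDerivAt (fun t : ℝ => Real.log (t + r)) (t + r)⁻¹ t := by
      have := (Real.hasDerivAt_log (by positivity : t + r ≠ 0)).comp t
        ((hasDerivAt_id t).add_const r)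
      simpa [Function.comp_def] using this
    have := h1.sub h2
    convert this using 1
    exacts [rfl, rfl, rfl, by rw [inv_sub_inv ht0.ne' (by positivity)]; ring]
  have hpos : ∀ t ∈ Set.Ioi a, 0 ≤ r / (t * (t + r)) := by
    intro t ht; have : 0 < t := ha.trans ht; positivity
  have hcont : ContinuousWithinAt (fun t => Real.log t - Real.log (t + r)) (Set.Ici a) a := by
    apply ContinuousWithinAt.sub
    · exact (Real.continuousAt_log ha.ne').continuousWithinAt
    · exact ((Real.continuousAt_log (by positivity)).comp (by fun_prop)).continuousWithinAt
  have htend : Tendsto (fun t => Real.log t - Real.log (t + r)) atTop (𝓝 0) := by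
    have h1 : Tendsto (fun t : ℝ => 1 + r / t) atTop (𝓝 1) := by
      have : Tendsto (fun t : ℝ => r / t) atTop (𝓝 0) := tendsto_const_nhds.div_atTop tendsto_id
      simpa using (tendsto_const_nhds (x := (1:ℝ))).add this
    have h2 : Tendsto (fun t : ℝ => -Real.log (1 + r / t)) atTop (𝓝 0) := by
      have := ((Real.continuousAt_log one_ne_zero).tendsto.comp h1).neg
      simpa using this
    apply h2.congr'
    filter_upwards [eventually_gt_atTop 0] with t ht
    rw [show (1 : ℝ) + r / t = (t + r) / t by field_simp, Real.log_div (by positivity) ht.ne']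
    ring
  constructor
  · exact integrableOn_Ioi_deriv_of_nonneg hcont hderiv hpos htend
  · rw [integral_Ioi_of_hasDerivAt_of_nonneg hcont hderiv hpos htend]
    rw [show (1 : ℝ) + r / a = (a + r) / a by field_simp, Real.log_div (by positivity) ha.ne']
    ring

private lemma myint2 (r : ℝ) (hr : 0 < r) :
    IntegrableOn (fun t => Real.sqrt t * (r / (t * (t + r)))) (Set.Ioi (0:ℝ)) ∧
    ∫ t in Set.Ioi (0:ℝ), Real.sqrt t * (r / (t * (t + r))) = Real.pi * Real.sqrt r := by
  set F : ℝ → ℝ := fun t => 2 * Real.sqrt r * Real.arctan (Real.sqrt t / Real.sqrt r) with hF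
  have hq : 0 < Real.sqrt r := Real.sqrt_pos.mpr hr
  have hderiv : ∀ t ∈ Set.Ioi (0:ℝ), HasDerivAt F (Real.sqrt t * (r / (t * (t + r)))) t := by
    intro t ht
    have ht0 : (0:ℝ) < t := ht
    have hs : 0 < Real.sqrt t := Real.sqrt_pos.mpr ht0
    have h1 : HasDerivAt (fun t : ℝ => Real.sqrt t / Real.sqrt r)
        (1 / (2 * Real.sqrt t) / Real.sqrt r) t := (Real.hasDerivAt_sqrt ht0.ne').div_const _
    have h2 := (Real.hasDerivAt_arctan (Real.sqrt t / Real.sqrt r)).comp t h1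
    have h3 := h2.const_mul (2 * Real.sqrt r)
    convert h3 using 1
    iterate 3 exact rfl
    have e1' : Real.sqrt t * Real.sqrt t = t := Real.mul_self_sqrt ht0.le
    field_simp
    rw [Real.sq_sqrt ht0.le, Real.sq_sqrt hr.le]; ring
  have hpos : ∀ t ∈ Set.Ioi (0:ℝ), 0 ≤ Real.sqrt t * (r / (t * (t + r))) := by
    intro t ht; have : (0:ℝ) < t := ht; positivity
  have hcont : ContinuousWithinAt F (Set.Ici (0:ℝ)) 0 :=
    (continuous_const.mul (Real.continuous_arctan.comp
      (Real.continuous_sqrt.div_const _))).continuousWithinAt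
  have htend : Tendsto F atTop (𝓝 (Real.pi * Real.sqrt r)) := by
    have hsq : Tendsto Real.sqrt atTop atTop := by
      apply (tendsto_rpow_atTop (by norm_num : (0:ℝ) < 1/2)).congr'
      filter_upwards [eventually_ge_atTop (0:ℝ)] with t ht
      rw [Real.sqrt_eq_rpow]
    have h1 : Tendsto (fun t : ℝ => Real.sqrt t / Real.sqrt r) atTop atTop :=
      hsq.atTop_div_const hq
    have h2 : Tendsto (fun t : ℝ => Real.arctan (Real.sqrt t / Real.sqrt r)) atTop
        (𝓝 (Real.pi / 2)) :=
      (tendsto_nhds_of_tendsto_nhdsWithin Real.tendsto_arctan_atTop).comp h1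
    have := h2.const_mul (2 * Real.sqrt r)
    convert this using 2
    ring
  have hF0 : F 0 = 0 := by simp [hF]
  constructor
  · exact integrableOn_Ioi_deriv_of_nonneg hcont hderiv hpos htend
  · rw [integral_Ioi_of_hasDerivAt_of_nonneg hcont hderiv hpos htend, hF0, sub_zero]

theorem stmt3 (A : ℝ) (hA : 0 < A) (lam : ℕ → ℝ) (hpos : ∀ k, 0 < lam k)
    (hmin : ∀ k, lam 0 ≤ lam k)
    (hcount : ∀ r : ℝ, 0 < r → ∀ s : Finset ℕ, (∀ k ∈ s, lam k ≤ r) →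
      (s.card : ℝ) ≤ A + Real.sqrt r)
    (z : ℂ) :
    Multipliable (fun k : ℕ => 1 - z / (lam k : ℂ)) ∧
    Real.log ‖∏' k : ℕ, (1 - z / (lam k : ℂ))‖ ≤
      Real.pi * Real.sqrt ‖z‖ + A * Real.log (1 + ‖z‖ / lam 0) := by
  by_cases hz : z = 0
  · subst hz
    have h1 : (fun k : ℕ => 1 - (0:ℂ) / (lam k : ℂ)) = fun _ => 1 := by funext k; simp
    constructor
    · rw [h1]; exact multipliable_one
    · rw [h1, tprod_one]; simp
  -- main case
  set r := ‖z‖ with hrdef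
  have hr : 0 < r := norm_pos_iff.mpr hz
  set g : ℝ → ℝ := fun t => r / (t * (t + r)) with hg
  have hgm : Measurable g := measurable_const.div (measurable_id.mul (measurable_id.add_const r))
  have hmeas : Measurable (fun t => ENNReal.ofReal (g t)) := hgm.ennreal_ofReal
  -- step 1 : the lintegral representation
  have key1 : ∀ a : ℝ, 0 < a →
      (∫⁻ t in Set.Ioi a, ENNReal.ofReal (g t)) = ENNReal.ofReal (Real.log (1 + r / a)) := by
    intro a ha
    obtain ⟨hint, heq⟩ := myint1 r a hr ha
    rw [← ofReal_integral_eq_lintegral_ofReal hint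
      (((ae_restrict_iff' measurableSet_Ioi).2 (Filter.Eventually.of_forall fun t ht => by
        have h0 : 0 < t := ha.trans ht
        have : 0 < t * (t + r) := by positivity
        positivity))), heq]
  have key2 : (∫⁻ t in Set.Ioi (0:ℝ), ENNReal.ofReal (Real.sqrt t * g t))
      = ENNReal.ofReal (Real.pi * Real.sqrt r) := by
    obtain ⟨hint, heq⟩ := myint2 r hr
    rw [← ofReal_integral_eq_lintegral_ofReal hint
      (((ae_restrict_iff' measurableSet_Ioi).2 (Filter.Eventually.of_forall fun t ht => by
        have h0 : (0:ℝ) < t := ht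
        have : 0 < t * (t + r) := by positivity
        positivity))), heq]
  -- counting function bound, pointwise
  have hpt : ∀ t : ℝ, (∑' k, (Set.Ioi (lam k)).indicator (fun u => ENNReal.ofReal (g u)) t)
      ≤ (Set.Ioi (lam 0)).indicator
        (fun u => ENNReal.ofReal (A + Real.sqrt u) * ENNReal.ofReal (g u)) t := by
    intro t
    by_cases ht : lam 0 < t
    · have ht0 : 0 < t := (hpos 0).trans ht
      rw [Set.indicator_of_mem (Set.mem_Ioi.mpr ht)]
      have e : ∀ k, (Set.Ioi (lam k)).indicator (fun u => ENNReal.ofReal (g u)) t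
          = (Set.Ioi (lam k)).indicator (fun _ => (1:ENNReal)) t * ENNReal.ofReal (g t) := by
        intro k; by_cases h : t ∈ Set.Ioi (lam k) <;> simp [h]
      rw [tsum_congr e, ENNReal.tsum_mul_right]
      apply mul_le_mul_left
      rw [ENNReal.tsum_eq_iSup_sum]
      apply iSup_le
      intro s
      have hs : ∑ k ∈ s, (Set.Ioi (lam k)).indicator (fun _ => (1:ENNReal)) t
          = ((s.filter fun k => lam k < t).card : ENNReal) := by
        simp [Set.indicator_apply, Set.mem_Ioi, Finset.sum_boole]
      rw [hs, ← ENNReal.ofReal_natCast]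
      apply ENNReal.ofReal_le_ofReal
      exact hcount t ht0 _ (fun k hk => (Finset.mem_filter.mp hk).2.le)
    · rw [Set.indicator_of_notMem (by simpa using ht)]
      have : ∀ k, (Set.Ioi (lam k)).indicator (fun u => ENNReal.ofReal (g u)) t = 0 := by
        intro k
        apply Set.indicator_of_notMem
        simp only [Set.mem_Ioi, not_lt]
        exact le_trans (le_of_not_gt ht) (hmin k)
      rw [tsum_congr this]
      simp
  -- the main tsum bound in ℝ≥0∞
  have keyS : ∑' k : ℕ, ENNReal.ofReal (Real.log (1 + r / lam k))
      ≤ ENNReal.ofReal (Real.pi * Real.sqrt r + A * Real.log (1 + r / lam 0)) := by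
    have e1 : ∀ k : ℕ, ENNReal.ofReal (Real.log (1 + r / lam k))
        = ∫⁻ t, (Set.Ioi (lam k)).indicator (fun u => ENNReal.ofReal (g u)) t := by
      intro k
      rw [lintegral_indicator measurableSet_Ioi, key1 _ (hpos k)]
    calc ∑' k : ℕ, ENNReal.ofReal (Real.log (1 + r / lam k))
        = ∫⁻ t, ∑' k, (Set.Ioi (lam k)).indicator (fun u => ENNReal.ofReal (g u)) t := by
          rw [tsum_congr e1,
            lintegral_tsum (fun k => (hmeas.indicator measurableSet_Ioi).aemeasurable)]
      _ ≤ ∫⁻ t, (Set.Ioi (lam 0)).indicator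
            (fun u => ENNReal.ofReal (A + Real.sqrt u) * ENNReal.ofReal (g u)) t :=
          lintegral_mono hpt
      _ = ∫⁻ t in Set.Ioi (lam 0), ENNReal.ofReal (A + Real.sqrt t) * ENNReal.ofReal (g t) :=
          lintegral_indicator measurableSet_Ioi _
      _ = ∫⁻ t in Set.Ioi (lam 0),
            (ENNReal.ofReal (A * g t) + ENNReal.ofReal (Real.sqrt t * g t)) := by
          apply setLIntegral_congr_fun measurableSet_Ioi
          intro t ht
          have ht0 : 0 < t := (hpos 0).trans ht
          have hgt : 0 ≤ g t := by
            have : 0 < t * (t + r) := by positivity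
            simp only [hg]
            positivity
          dsimp only
          rw [← ENNReal.ofReal_mul (by positivity), ← ENNReal.ofReal_add
            (mul_nonneg hA.le hgt) (mul_nonneg (Real.sqrt_nonneg t) hgt)]
          ring_nf
      _ = (∫⁻ t in Set.Ioi (lam 0), ENNReal.ofReal (A * g t))
            + ∫⁻ t in Set.Ioi (lam 0), ENNReal.ofReal (Real.sqrt t * g t) :=
          lintegral_add_left ((hgm.const_mul A).ennreal_ofReal) _
      _ ≤ ENNReal.ofReal (A * Real.log (1 + r / lam 0)) + ENNReal.ofReal (Real.pi * Real.sqrt r) := by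
          apply add_le_add
          · apply le_of_eq
            simp_rw [ENNReal.ofReal_mul hA.le]
            rw [lintegral_const_mul _ hmeas, key1 _ (hpos 0)]
          · rw [← key2]
            exact lintegral_mono_set (Set.Ioi_subset_Ioi (hpos 0).le)
      _ = ENNReal.ofReal (Real.pi * Real.sqrt r + A * Real.log (1 + r / lam 0)) := by
          rw [← ENNReal.ofReal_add (mul_nonneg hA.le (Real.log_nonneg (by
            have : 0 ≤ r / lam 0 := div_nonneg hr.le (hpos 0).le
            linarith))) (mul_nonneg Real.pi_pos.le (Real.sqrt_nonneg r))]
          ring_nf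
  have hLnn : ∀ k : ℕ, 0 ≤ Real.log (1 + r / lam k) := fun k =>
    Real.log_nonneg (by
      have h1 : 0 < lam k := hpos k
      have : 0 ≤ r / lam k := div_nonneg hr.le h1.le
      linarith)
  have hLne : ∑' k : ℕ, ENNReal.ofReal (Real.log (1 + r / lam k)) ≠ ⊤ :=
    ne_top_of_le_ne_top ENNReal.ofReal_ne_top keyS
  have hL : Summable (fun k : ℕ => Real.log (1 + r / lam k)) := by
    refine (ENNReal.summable_toReal hLne).congr fun k => ?_
    exact ENNReal.toReal_ofReal (hLnn k)
  have hRHS0 : 0 ≤ Real.pi * Real.sqrt r + A * Real.log (1 + r / lam 0) := by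
    have h1 : 0 < lam 0 := hpos 0
    have h2 : 0 ≤ r / lam 0 := div_nonneg hr.le h1.le
    have := Real.log_nonneg (by linarith : (1:ℝ) ≤ 1 + r / lam 0)
    have hpi := Real.pi_pos
    have := Real.sqrt_nonneg r
    nlinarith
  have hLsum : ∑' k : ℕ, Real.log (1 + r / lam k)
      ≤ Real.pi * Real.sqrt r + A * Real.log (1 + r / lam 0) := by
    rw [← ENNReal.ofReal_le_ofReal_iff hRHS0, ENNReal.ofReal_tsum_of_nonneg hLnn hL]
    exact keyS
  -- summability of r / lam k
  have hsum : Summable (fun k : ℕ => r / lam k) := by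
    apply Summable.of_nonneg_of_le (fun k => div_nonneg hr.le (hpos k).le)
      (fun k => ?_) (hL.mul_left (1 + r / lam 0))
    have hk : 0 < lam k := hpos k
    have hxX : r / lam k ≤ r / lam 0 := by
      apply div_le_div_of_nonneg_left hr.le (hpos 0) (hmin k)
    set x := r / lam k with hx
    have hx0 : 0 < x := div_pos hr hk
    have hlog : x / (1 + x) ≤ Real.log (1 + x) := by
      have h := Real.log_le_sub_one_of_pos (show 0 < (1+x)⁻¹ by positivity)
      rw [Real.log_inv] at h
      have e : 1 - (1+x)⁻¹ = x / (1+x) := by field_simp; ring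
      linarith [e ▸ (by linarith : 1 - (1+x)⁻¹ ≤ Real.log (1+x))]
    have h2 : x / (1 + r / lam 0) ≤ x / (1 + x) := by
      apply div_le_div_of_nonneg_left hx0.le (by linarith) (by linarith)
    have h3 : x / (1 + r / lam 0) ≤ Real.log (1 + x) := h2.trans hlog
    have hden : (0:ℝ) < 1 + r / lam 0 := by
      have h00 := hpos 0
      have : 0 ≤ r / lam 0 := div_nonneg hr.le h00.le
      linarith
    rw [div_le_iff₀ hden] at h3
    linarith [h3]
  -- finiteness of small lambdas
  have hfin : {k : ℕ | lam k ≤ 2 * r}.Finite := by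
    by_contra hinf
    obtain ⟨t, hts, htc⟩ := Set.Infinite.exists_subset_card_eq hinf
      (⌈A + Real.sqrt (2*r)⌉₊ + 1)
    have hb := hcount (2*r) (by positivity) t (fun k hk => hts hk)
    have hceil := Nat.le_ceil (A + Real.sqrt (2*r))
    rw [htc] at hb
    push_cast at hb
    linarith
  -- multipliability
  have hM : Multipliable (fun k : ℕ => 1 - z / (lam k : ℂ)) := by
    by_cases hzero : ∃ k, (1 : ℂ) - z / (lam k : ℂ) = 0
    · obtain ⟨k₀, hk₀⟩ := hzero
      refine ⟨0, ?_⟩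
      have hev : ∀ᶠ s : Finset ℕ in atTop, ∏ k ∈ s, (1 - z/(lam k:ℂ)) = 0 := by
        filter_upwards [eventually_ge_atTop ({k₀} : Finset ℕ)] with s hs
        exact Finset.prod_eq_zero (hs (Finset.mem_singleton_self k₀)) hk₀
      exact tendsto_const_nhds.congr' (by filter_upwards [hev] with s hs using hs.symm)
    · push_neg at hzero
      have hnorm : ∀ k : ℕ, ‖z / (lam k : ℂ)‖ = r / lam k := by
        intro k
        rw [norm_div, Complex.norm_real, Real.norm_of_nonneg (hpos k).le]
      have hlog : Summable (fun k : ℕ => Complex.log (1 - z / (lam k : ℂ))) := by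
        apply Summable.of_norm_bounded_eventually (hsum.mul_left (3/2))
        rw [Filter.eventually_cofinite]
        apply Set.Finite.subset hfin
        intro k hk
        simp only [Set.mem_setOf_eq] at hk ⊢
        by_contra h2r
        push_neg at h2r
        apply hk
        have hle : ‖-(z / (lam k : ℂ))‖ ≤ 1/2 := by
          rw [norm_neg, hnorm k, div_le_iff₀ (hpos k)]
          linarith
        have := Complex.norm_log_one_add_half_le_self hle
        rw [norm_neg, hnorm k] at this
        rw [sub_eq_add_neg]
        exact this
      have := Complex.multipliable_of_summable_log hlog
      exact this
  refine ⟨hM, ?_⟩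
  rcases eq_or_lt_of_le (norm_nonneg (∏' k : ℕ, (1 - z / (lam k : ℂ)))) with h0 | h0
  · rw [← h0, Real.log_zero]; exact hRHS0
  · rw [Real.log_le_iff_le_exp h0, hM.norm_tprod]
    apply le_of_tendsto hM.norm.hasProd
    apply Filter.Eventually.of_forall
    intro s
    calc ∏ k ∈ s, ‖1 - z/(lam k : ℂ)‖
        ≤ ∏ k ∈ s, (1 + r / lam k) := by
          apply Finset.prod_le_prod (fun k _ => norm_nonneg _)
          intro k _
          calc ‖1 - z/(lam k : ℂ)‖ ≤ ‖(1:ℂ)‖ + ‖z/(lam k : ℂ)‖ := by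
                exact norm_sub_le _ _
            _ = 1 + r / lam k := by
                rw [norm_one, norm_div, Complex.norm_real,
                  Real.norm_of_nonneg (hpos k).le]
      _ = ∏ k ∈ s, Real.exp (Real.log (1 + r / lam k)) := by
          apply Finset.prod_congr rfl
          intro k _
          rw [Real.exp_log (by have hk := hpos k; have : 0 < r / lam k := div_pos hr hk; linarith)]
      _ = Real.exp (∑ k ∈ s, Real.log (1 + r / lam k)) := (Real.exp_sum s _).symm
      _ ≤ Real.exp (∑' k : ℕ, Real.log (1 + r / lam k)) :=
          Real.exp_le_exp.mpr (Summable.sum_le_tsum s (fun k _ => hLnn k) hL)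
      _ ≤ Real.exp (Real.pi * Real.sqrt r + A * Real.log (1 + r / lam 0)) :=
          Real.exp_le_exp.mpr hLsum
end

section
/- ∫₀¹ f'(θ)/√θ dθ − f(1) = − ∑_{k≥1} (1/(k(4k−1)))·ζ(2k)/π^{2k}, where f(θ) = ln(sin θ/θ); in particular this series Σ* = ∑_{k≥1} ζ(2k)/(k(4k−1)π^{2k}) converges and is positive. -/
open Real MeasureTheory Filter Set

noncomputable def Sz (k : ℕ) : ℝ := ∑' n : ℕ, (((n : ℝ) + 1) ^ (2 * (k + 1)))⁻¹

lemma Sz_def (k : ℕ) : Sz k = ∑' n : ℕ, (((n : ℝ) + 1) ^ (2 * (k + 1)))⁻¹ := rfl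

lemma Sz_summable (k : ℕ) : Summable (fun n : ℕ => (((n : ℝ) + 1) ^ (2 * (k + 1)))⁻¹) := by
  have h : Summable (fun n : ℕ => ((n : ℝ) ^ (2 * (k + 1)))⁻¹) := by
    simpa [one_div] using (Real.summable_one_div_nat_pow (p := 2 * (k + 1))).mpr (by omega)
  have := (summable_nat_add_iff 1).mpr h
  simpa using this

lemma Sz_pos (k : ℕ) : 0 < Sz k := by
  refine Summable.tsum_pos (Sz_summable k) (fun n => by positivity) 0 (by norm_num)

lemma Sz_le (k : ℕ) : Sz k ≤ π ^ 2 / 6 := by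
  have h0 : HasSum (fun n : ℕ => (((n : ℝ) + 1) ^ 2)⁻¹) (π ^ 2 / 6) := by
    have := (hasSum_nat_add_iff (f := fun n : ℕ => 1 / (n : ℝ) ^ 2) 1).mpr (by simpa using hasSum_zeta_two)
    simpa [one_div] using this
  rw [Sz, ← h0.tsum_eq]
  refine Summable.tsum_le_tsum (fun n => ?_) (Sz_summable k) h0.summable
  have h1 : (1 : ℝ) ≤ (n : ℝ) + 1 := by simp [Nat.cast_nonneg]
  exact inv_anti₀ (by positivity) (pow_le_pow_right₀ h1 (by omega))

lemma zeta_re (k : ℕ) : (riemannZeta (2 * (k + 1))).re = Sz k := by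
  have h2 : (1 : ℕ) < 2 * (k + 1) := by omega
  have h := zeta_nat_eq_tsum_of_gt_one h2
  have harg : ((2 * (k + 1) : ℕ) : ℂ) = 2 * ((k : ℂ) + 1) := by push_cast; ring
  rw [harg] at h
  rw [h]
  have hsum : Summable (fun n : ℕ => 1 / (n : ℂ) ^ (2 * (k + 1))) := by
    refine Summable.of_norm ?_
    have : Summable (fun n : ℕ => ((n : ℝ) ^ (2 * (k + 1)))⁻¹) := by
      simpa [one_div] using (Real.summable_one_div_nat_pow (p := 2 * (k + 1))).mpr (by omega)
    refine this.congr fun n => ?_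
    simp [norm_div, one_div]
  have hshift : Sz k = ∑' n : ℕ, (1 : ℝ) / (n : ℝ) ^ (2 * (k + 1)) := by
    have hsR : Summable (fun n : ℕ => (1 : ℝ) / (n : ℝ) ^ (2 * (k + 1))) := by
      simpa [one_div] using (Real.summable_one_div_nat_pow (p := 2 * (k + 1))).mpr (by omega)
    rw [Summable.tsum_eq_zero_add hsR]
    have h0 : (1 : ℝ) / (0 : ℝ) ^ (2 * (k + 1)) = 0 := by
      norm_num [zero_pow, (by omega : 2 * (k + 1) ≠ 0)]
    rw [Nat.cast_zero, h0, zero_add, Sz]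
    congr 1; ext n; push_cast; simp [one_div]
  rw [hshift, ← Complex.reCLM_apply, Complex.reCLM.map_tsum hsum]
  congr 1; ext n
  have : ((1 : ℂ) / (n : ℂ) ^ (2 * (k + 1))) = (((1 : ℝ) / (n : ℝ) ^ (2 * (k + 1)) : ℝ) : ℂ) := by
    push_cast; ring
  rw [this, Complex.reCLM_apply, Complex.ofReal_re]

lemma logsin_hasSum {x : ℝ} (hx0 : 0 < x) (hx3 : x < 3) :
    HasSum (fun k : ℕ => Sz k * (x / π) ^ (2 * (k + 1)) / (k + 1)) (-Real.log (Real.sin x / x)) := by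
  have hxpi : x < π := hx3.trans pi_gt_three
  have hxne : x ≠ 0 := ne_of_gt hx0
  have hpi : (0 : ℝ) < π := pi_pos
  set y : ℕ → ℝ := fun j => (x / π) ^ 2 / ((j : ℝ) + 1) ^ 2 with hy
  have hy01 : ∀ j, 0 < y j ∧ y j < 1 := by
    intro j
    have h1 : (0 : ℝ) < ((j : ℝ) + 1) ^ 2 := by positivity
    have hq : (x / π) ^ 2 < 1 := by
      have : x / π < 1 := (div_lt_one hpi).mpr hxpi
      have h0 : 0 < x / π := div_pos hx0 hpi
      nlinarith
    constructor
    · positivity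
    · calc y j ≤ (x / π) ^ 2 / 1 := by
            apply div_le_div_of_nonneg_left (by positivity) one_pos
            nlinarith [Nat.cast_nonneg (α := ℝ) j]
        _ < 1 := by simpa using hq
  -- product tendsto
  have hprod : Tendsto (fun N : ℕ => ∏ j ∈ Finset.range N, (1 - y j)) atTop (nhds (Real.sin x / x)) := by
    have h := Real.tendsto_euler_sin_prod (x / π)
    have hpix : π * (x / π) = x := by field_simp
    rw [hpix] at h
    have h2 := h.div_const x
    refine h2.congr fun N => ?_
    rw [mul_comm, mul_div_assoc, div_self hxne, mul_one]
  have hsinpos : 0 < Real.sin x / x := div_pos (Real.sin_pos_of_pos_of_lt_pi hx0 hxpi) hx0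
  -- log of partial products
  have hlog : Tendsto (fun N : ℕ => ∑ j ∈ Finset.range N, Real.log (1 - y j)) atTop
      (nhds (Real.log (Real.sin x / x))) := by
    have hc : ContinuousAt Real.log (Real.sin x / x) := Real.continuousAt_log (ne_of_gt hsinpos)
    have := hc.tendsto.comp hprod
    refine this.congr fun N => ?_
    exact Real.log_prod (fun j _ => by have := hy01 j; nlinarith [(hy01 j).2])
  have hterm_nonneg : ∀ j, 0 ≤ -Real.log (1 - y j) := by
    intro j
    have := (hy01 j).1
    have hle : 1 - y j ≤ 1 := by linarith
    have := Real.log_nonpos (by nlinarith [(hy01 j).2]) hle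
    linarith
  have hasSum_n : HasSum (fun j : ℕ => -Real.log (1 - y j)) (-Real.log (Real.sin x / x)) := by
    rw [hasSum_iff_tendsto_nat_of_nonneg hterm_nonneg]
    have := hlog.neg
    refine this.congr fun N => ?_
    simp [Finset.sum_neg_distrib]
  -- per-n expansion
  have hexp : ∀ j : ℕ, HasSum (fun m : ℕ => y j ^ (m + 1) / (m + 1)) (-Real.log (1 - y j)) := by
    intro j
    exact Real.hasSum_pow_div_log_of_abs_lt_one (by rw [abs_of_pos (hy01 j).1]; exact (hy01 j).2)
  -- product summability
  set F : ℕ × ℕ → ℝ := fun p => y p.1 ^ (p.2 + 1) / (p.2 + 1) with hF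
  have hFnn : 0 ≤ F := by
    intro p
    have := (hy01 p.1).1
    positivity
  have hFsum : Summable F := by
    rw [summable_prod_of_nonneg hFnn]
    refine ⟨fun j => (hexp j).summable, ?_⟩
    refine hasSum_n.summable.congr fun j => ?_
    exact (hexp j).tsum_eq.symm
  have hFhasSum : HasSum F (-Real.log (Real.sin x / x)) := by
    have h1 := hFsum.hasSum
    have h2 : HasSum (fun j : ℕ => ∑' m : ℕ, F (j, m)) (∑' p, F p) :=
      h1.prod_fiberwise (fun j => ((hexp j).summable.hasSum))
    have e : (fun j : ℕ => ∑' m : ℕ, F (j, m)) = fun j => -Real.log (1 - y j) :=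
      funext fun j => (hexp j).tsum_eq
    rw [e] at h2
    rwa [h2.unique hasSum_n] at h1
  -- swap
  have hswap : HasSum (F ∘ (Equiv.prodComm ℕ ℕ)) (-Real.log (Real.sin x / x)) :=
    ((Equiv.prodComm ℕ ℕ).hasSum_iff).mpr hFhasSum
  -- fiberwise in m
  have hfiber : ∀ m : ℕ, HasSum (fun j : ℕ => F (j, m)) (Sz m * (x / π) ^ (2 * (m + 1)) / (m + 1)) := by
    intro m
    have h := ((Sz_summable m).hasSum.mul_left ((x / π) ^ (2 * (m + 1)) / ((m : ℝ) + 1)))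
    have hval : (x / π) ^ (2 * (m + 1)) / ((m : ℝ) + 1) * ∑' (b : ℕ), (((b : ℝ) + 1) ^ (2 * (m + 1)))⁻¹
        = Sz m * (x / π) ^ (2 * (m + 1)) / ((m : ℝ) + 1) := by rw [Sz_def]; ring
    rw [hval] at h
    have e : (fun j : ℕ => F (j, m)) =
        fun j : ℕ => (x / π) ^ (2 * (m + 1)) / ((m : ℝ) + 1) * ((((j : ℝ) + 1) ^ (2 * (m + 1)))⁻¹) := by
      funext j
      show y j ^ (m + 1) / ((m : ℝ) + 1) = _
      rw [hy]
      simp only [div_pow, ← pow_mul]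
      ring
    rw [e]
    exact h
  have := hswap.prod_fiberwise (fun m => hfiber m)
  exact this

noncomputable def gg (k : ℕ) (x : ℝ) : ℝ := -(Sz k * (x / π) ^ (2 * (k + 1)) / (k + 1))
noncomputable def gg' (k : ℕ) (x : ℝ) : ℝ := -(2 * Sz k * x ^ (2 * k + 1) / π ^ (2 * (k + 1)))

lemma hasDeriv_gg (k : ℕ) (x : ℝ) : HasDerivAt (gg k) (gg' k x) x := by
  have h1 : HasDerivAt (fun x : ℝ => (x / π) ^ (2 * (k + 1)))
      ((2 * (k + 1) : ℕ) * (x / π) ^ (2 * (k + 1) - 1) * (1 / π)) x := by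
    have := ((hasDerivAt_id x).div_const π).pow (2 * (k + 1))
    simpa [Pi.pow_def] using this
  have h2 := ((h1.const_mul (Sz k)).div_const ((k : ℝ) + 1)).neg
  have h2' : HasDerivAt (gg k) (-(Sz k * (↑(2 * (k + 1)) * (x / π) ^ (2 * (k + 1) - 1) * (1 / π)) / (↑k + 1))) x := h2
  convert h2' using 1
  have hexp : 2 * (k + 1) - 1 = 2 * k + 1 := by omega
  rw [hexp]
  have hk1 : ((k : ℝ) + 1) ≠ 0 := by positivity
  rw [gg', div_pow]
  have hpe : (2 * (k + 1) : ℕ) = (2 * k + 1) + 1 := by omega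
  rw [hpe, pow_succ π (2 * k + 1)]
  push_cast
  field_simp
  ring

lemma deriv_logsin {θ : ℝ} (hθ : θ ∈ Ioo (0 : ℝ) 1) :
    deriv (fun t => Real.log (Real.sin t / t)) θ = ∑' k, gg' k θ := by
  have hπ : (0 : ℝ) < π := pi_pos
  have h9 : (9 : ℝ) < π ^ 2 := by nlinarith [pi_gt_three]
  have hu : Summable (fun k : ℕ => (9 / π ^ 2) ^ k) :=
    summable_geometric_of_lt_one (by positivity) ((div_lt_one (by positivity)).mpr h9)
  have hbound : ∀ (k : ℕ) (y : ℝ), y ∈ Ioo (0 : ℝ) 3 → ‖gg' k y‖ ≤ (9 / π ^ 2) ^ k := by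
    intro k y hy
    have hSz := (Sz_pos k).le
    have hnn : (0:ℝ) ≤ 2 * Sz k * y ^ (2 * k + 1) / π ^ (2 * (k + 1)) :=
      div_nonneg (mul_nonneg (mul_nonneg (by norm_num) hSz) (pow_nonneg hy.1.le _))
        (pow_nonneg hπ.le _)
    rw [gg', norm_neg, Real.norm_eq_abs, abs_of_nonneg hnn]
    have step1 : 2 * Sz k * y ^ (2 * k + 1) / π ^ (2 * (k + 1))
        ≤ 2 * (π ^ 2 / 6) * 3 ^ (2 * k + 1) / π ^ (2 * (k + 1)) := by
      have h1 : y ^ (2 * k + 1) ≤ 3 ^ (2 * k + 1) := pow_le_pow_left₀ hy.1.le hy.2.le _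
      gcongr
      all_goals first | exact Sz_le k | exact h1 | exact pow_nonneg hy.1.le _ | positivity
    refine step1.trans (le_of_eq ?_)
    have e1 : (3 : ℝ) ^ (2 * k + 1) = 3 * 9 ^ k := by
      rw [pow_succ, pow_mul]; norm_num; ring
    have e2 : π ^ (2 * (k + 1)) = π ^ 2 * (π ^ 2) ^ k := by
      rw [pow_mul, pow_succ]; ring
    rw [e1, e2, div_pow]
    field_simp
    ring
  have hg0 : Summable fun k => gg k 1 := by
    have := (logsin_hasSum one_pos (by norm_num)).summable.neg
    exact this.congr fun k => by rw [gg]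
  have h3 : θ ∈ Ioo (0 : ℝ) 3 := ⟨hθ.1, by linarith [hθ.2]⟩
  have hD : HasDerivAt (fun z => ∑' k, gg k z) (∑' k, gg' k θ) θ :=
    hasDerivAt_tsum_of_isPreconnected hu isOpen_Ioo (convex_Ioo (0:ℝ) 3).isPreconnected
      (fun k y _ => hasDeriv_gg k y) hbound (y₀ := 1) ⟨one_pos, by norm_num⟩ hg0 h3
  have heq : (fun t => Real.log (Real.sin t / t)) =ᶠ[nhds θ] (fun z => ∑' k, gg k z) := by
    filter_upwards [isOpen_Ioo.mem_nhds h3] with x hx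
    have h := (logsin_hasSum hx.1 hx.2).tsum_eq
    show Real.log (Real.sin x / x) = ∑' k, gg k x
    rw [show ∑' k, gg k x = -∑' k : ℕ, Sz k * (x / π) ^ (2 * (k + 1)) / (k + 1) from by
      rw [← tsum_neg]; rfl]
    rw [h]; ring
  exact ((hD.congr_of_eventuallyEq heq).deriv)

noncomputable def hh (k : ℕ) (θ : ℝ) : ℝ := -(2 * Sz k * θ ^ (2 * k) * Real.sqrt θ / π ^ (2 * (k + 1)))

lemma hh_cont (k : ℕ) : Continuous (hh k) := by
  unfold hh
  fun_prop

lemma hh_integrable (k : ℕ) : IntegrableOn (hh k) (Ioo (0:ℝ) 1) := by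
  exact ((hh_cont k).integrableOn_Icc (a := 0) (b := 1)).mono_set Ioo_subset_Icc_self

lemma hh_norm_int_le (k : ℕ) :
    (∫ θ in Ioo (0:ℝ) 1, ‖hh k θ‖) ≤ 2 * (π ^ 2 / 6) / π ^ (2 * (k + 1)) := by
  have hπ : (0 : ℝ) < π := pi_pos
  have hb : ∀ θ ∈ Ioo (0:ℝ) 1, ‖hh k θ‖ ≤ 2 * (π ^ 2 / 6) / π ^ (2 * (k + 1)) := by
    intro θ hθ
    have hSz := (Sz_pos k).le
    have h1 : θ ^ (2 * k) ≤ 1 := pow_le_one₀ hθ.1.le hθ.2.le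
    have h2 : Real.sqrt θ ≤ 1 := by
      rw [show (1:ℝ) = Real.sqrt 1 from (Real.sqrt_one).symm]
      exact Real.sqrt_le_sqrt hθ.2.le
    have h3 : (0:ℝ) ≤ Real.sqrt θ := Real.sqrt_nonneg θ
    have h4 : (0:ℝ) ≤ θ ^ (2*k) := pow_nonneg hθ.1.le _
    rw [hh, norm_neg, Real.norm_eq_abs, abs_of_nonneg (by positivity)]
    calc 2 * Sz k * θ ^ (2 * k) * Real.sqrt θ / π ^ (2 * (k + 1))
        ≤ 2 * (π ^ 2 / 6) * 1 * 1 / π ^ (2 * (k + 1)) := by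
          gcongr
          exact Sz_le k
      _ = 2 * (π ^ 2 / 6) / π ^ (2 * (k + 1)) := by ring
  calc (∫ θ in Ioo (0:ℝ) 1, ‖hh k θ‖)
      ≤ ∫ θ in Ioo (0:ℝ) 1, 2 * (π ^ 2 / 6) / π ^ (2 * (k + 1)) := by
        refine setIntegral_mono_on (hh_integrable k).norm ((integrableOn_const_iff (C := 2 * (π ^ 2 / 6) / π ^ (2 * (k + 1)))).mpr ?_) measurableSet_Ioo hb
        right; rw [Real.volume_Ioo]; norm_num
    _ = 2 * (π ^ 2 / 6) / π ^ (2 * (k + 1)) := by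
        rw [setIntegral_const, Real.volume_real_Ioo]
        norm_num

lemma c_summable : Summable (fun k : ℕ => 2 * (π ^ 2 / 6) / π ^ (2 * (k + 1))) := by
  have hπ : (0 : ℝ) < π := pi_pos
  have h9 : (9 : ℝ) < π ^ 2 := by nlinarith [pi_gt_three]
  have hg : Summable (fun k : ℕ => ((π ^ 2)⁻¹) ^ k) :=
    summable_geometric_of_lt_one (by positivity) (by
      rw [inv_lt_one_iff₀]; right; linarith)
  refine ((hg.mul_left (2 * (π ^ 2 / 6) / π ^ 2)).congr fun k => ?_)
  rw [inv_pow, ← div_eq_mul_inv, div_div, ← pow_succ', ← pow_mul]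

lemma hh_integral (k : ℕ) :
    ∫ θ in Ioo (0:ℝ) 1, hh k θ = -(4 * Sz k / ((4 * (k:ℝ) + 3) * π ^ (2 * (k + 1)))) := by
  have hπ : (0 : ℝ) < π := pi_pos
  have hC : ∀ θ : ℝ, hh k θ = (-(2 * Sz k / π ^ (2 * (k + 1)))) * (θ ^ (2 * k) * Real.sqrt θ) := by
    intro θ; rw [hh]; ring
  simp_rw [hC]
  rw [integral_const_mul]
  have hJ : ∫ θ in Ioo (0:ℝ) 1, θ ^ (2 * k) * Real.sqrt θ = 1 / ((2 * (k:ℝ) + 1/2) + 1) := by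
    rw [← integral_Ioc_eq_integral_Ioo, ← intervalIntegral.integral_of_le (by norm_num : (0:ℝ) ≤ 1)]
    have hE : EqOn (fun θ : ℝ => θ ^ (2 * k) * Real.sqrt θ)
        (fun θ : ℝ => θ ^ ((2 * (k:ℝ) + 1/2) : ℝ)) (Set.uIcc (0:ℝ) 1) := by
      intro θ hθ
      rw [Set.uIcc_of_le (by norm_num : (0:ℝ) ≤ 1)] at hθ
      rcases eq_or_lt_of_le hθ.1 with h0 | h0
      · simp only [← h0]
        rw [Real.sqrt_zero, mul_zero, Real.zero_rpow (by positivity)]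
      · show θ ^ (2 * k) * Real.sqrt θ = θ ^ ((2 * (k:ℝ) + 1/2) : ℝ)
        rw [Real.sqrt_eq_rpow, ← Real.rpow_natCast θ (2 * k), ← Real.rpow_add h0]
        push_cast
        ring_nf
    rw [intervalIntegral.integral_congr hE]
    have hk0 : (0:ℝ) ≤ 2 * (k:ℝ) := by positivity
    rw [integral_rpow (Or.inl (by linarith))]
    rw [Real.one_rpow, Real.zero_rpow (by positivity)]
    norm_num
  rw [hJ]
  have h43 : (4 * (k:ℝ) + 3) ≠ 0 := by positivity
  have hk2 : (2 * (k:ℝ) + 1/2 + 1) ≠ 0 := by positivity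
  field_simp
  ring

lemma integral_piece :
    (∫ θ in Ioo (0:ℝ) 1, deriv (fun t => Real.log (Real.sin t / t)) θ / Real.sqrt θ)
      = ∑' k : ℕ, (-(4 * Sz k / ((4 * (k:ℝ) + 3) * π ^ (2 * (k + 1))))) := by
  have hπ : (0 : ℝ) < π := pi_pos
  have hcong : ∀ θ ∈ Ioo (0:ℝ) 1,
      deriv (fun t => Real.log (Real.sin t / t)) θ / Real.sqrt θ = ∑' k, hh k θ := by
    intro θ hθ
    rw [deriv_logsin hθ, ← tsum_div_const]
    congr 1; funext k
    have hsq : Real.sqrt θ ≠ 0 := ne_of_gt (Real.sqrt_pos.mpr hθ.1)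
    have hss : Real.sqrt θ * Real.sqrt θ = θ := Real.mul_self_sqrt hθ.1.le
    rw [gg', hh, div_eq_iff hsq, pow_succ]
    linear_combination (2 * Sz k * θ ^ (2 * k) / π ^ (2 * (k + 1))) * hss
  rw [setIntegral_congr_fun measurableSet_Ioo hcong]
  have hsumnorm : Summable (fun k : ℕ => ∫ θ in Ioo (0:ℝ) 1, ‖hh k θ‖) := by
    refine Summable.of_nonneg_of_le (fun k => ?_) (fun k => hh_norm_int_le k) c_summable
    exact integral_nonneg fun θ => norm_nonneg _
  rw [← integral_tsum_of_summable_integral_norm (fun k => hh_integrable k) hsumnorm]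
  exact tsum_congr fun k => hh_integral k

theorem stmt9 :
    Summable (fun k : ℕ =>
      (riemannZeta (2 * (k + 1))).re / ((k + 1) * (4 * (k + 1) - 1) * Real.pi ^ (2 * (k + 1)))) ∧
    0 < ∑' k : ℕ,
      (riemannZeta (2 * (k + 1))).re / ((k + 1) * (4 * (k + 1) - 1) * Real.pi ^ (2 * (k + 1))) ∧
    (∫ θ in Set.Ioo (0:ℝ) 1, deriv (fun t => Real.log (Real.sin t / t)) θ / Real.sqrt θ)
        - Real.log (Real.sin 1 / 1) =
      -∑' k : ℕ,
        (riemannZeta (2 * (k + 1))).re / ((k + 1) * (4 * (k + 1) - 1) * Real.pi ^ (2 * (k + 1))) := by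
  have hπ : (0:ℝ) < π := pi_pos
  have hB : HasSum (fun k : ℕ => Sz k * ((1:ℝ) / π) ^ (2 * (k + 1)) / ((k:ℝ) + 1))
      (-Real.log (Real.sin 1 / 1)) := logsin_hasSum one_pos (by norm_num)
  have hAsum : Summable (fun k : ℕ => 4 * Sz k / ((4 * (k:ℝ) + 3) * π ^ (2 * (k + 1)))) := by
    have h1 : Summable (fun k : ℕ => ∫ θ in Ioo (0:ℝ) 1, hh k θ) := by
      refine Summable.of_norm (Summable.of_nonneg_of_le (fun k => norm_nonneg _) (fun k => ?_)
        c_summable)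
      exact (norm_integral_le_integral_norm _).trans (hh_norm_int_le k)
    refine h1.neg.congr fun k => ?_
    rw [hh_integral k, neg_neg]
  have hpos' : ∀ k : ℕ, (0:ℝ) < ((k:ℝ) + 1) * (4 * ((k:ℝ) + 1) - 1) * π ^ (2 * (k + 1)) := by
    intro k
    have hk : (0:ℝ) ≤ (k:ℝ) := Nat.cast_nonneg k
    have h1 : (0:ℝ) < (k:ℝ) + 1 := by linarith
    have h2 : (0:ℝ) < 4 * ((k:ℝ) + 1) - 1 := by linarith
    exact mul_pos (mul_pos h1 h2) (pow_pos hπ _)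
  have hterm : ∀ k : ℕ,
      4 * Sz k / ((4 * (k:ℝ) + 3) * π ^ (2 * (k + 1)))
        - Sz k * ((1:ℝ) / π) ^ (2 * (k + 1)) / ((k:ℝ) + 1)
      = (riemannZeta (2 * (k + 1))).re / ((k + 1) * (4 * (k + 1) - 1) * Real.pi ^ (2 * (k + 1))) := by
    intro k
    rw [zeta_re k]
    have hk : (0:ℝ) ≤ (k:ℝ) := Nat.cast_nonneg k
    have h1 : ((k:ℝ) + 1) ≠ 0 := by positivity
    have h2 : (4 * ((k:ℝ) + 1) - 1) ≠ 0 := by intro h; nlinarith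
    have h3 : (4 * (k:ℝ) + 3) ≠ 0 := by positivity
    have h4 : (π : ℝ) ≠ 0 := ne_of_gt hπ
    rw [one_div_pow]
    field_simp
    ring
  have hTsum : Summable (fun k : ℕ =>
      (riemannZeta (2 * (k + 1))).re / ((k + 1) * (4 * (k + 1) - 1) * Real.pi ^ (2 * (k + 1)))) :=
    (hAsum.sub hB.summable).congr hterm
  refine ⟨hTsum, ?_, ?_⟩
  · refine Summable.tsum_pos hTsum (fun k => ?_) 0 ?_
    · rw [zeta_re k]
      exact div_nonneg (Sz_pos k).le (hpos' k).le
    · rw [zeta_re 0]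
      exact div_pos (Sz_pos 0) (hpos' 0)
  · rw [integral_piece, tsum_neg]
    have hlog1 : Real.log (Real.sin 1 / 1)
        = -∑' k : ℕ, Sz k * ((1:ℝ) / π) ^ (2 * (k + 1)) / ((k:ℝ) + 1) := by
      have := hB.tsum_eq
      linarith
    have h2 : ∑' k : ℕ,
        (riemannZeta (2 * (k + 1))).re / ((k + 1) * (4 * (k + 1) - 1) * Real.pi ^ (2 * (k + 1)))
        = ∑' k : ℕ, (4 * Sz k / ((4 * (k:ℝ) + 3) * π ^ (2 * (k + 1)))
            - Sz k * ((1:ℝ) / π) ^ (2 * (k + 1)) / ((k:ℝ) + 1)) :=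
      (tsum_congr hterm).symm
    rw [hlog1, h2, Summable.tsum_sub hAsum hB.summable]
    ring
end
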